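/- arXiv:1711.04938 — 2 statements merged into one kernel-verified Lean document; each statement's English description precedes it below -/
import Mathlib

section
/- Let κ be a regular uncountable cardinal, let λ be the least inaccessible cardinal above κ, and let U be a κ-complete normal fine ultrafilter on P_κ(λ). Then the set D = {P ∈ P_κ(λ) : λ_P is the least inaccessible cardinal above κ_P} belongs to U. -/
open Set Cardinal

/-- The order type of a set of ordinals. -/
noncomputable def otp (S : Set Ordinal.{0}) : Ordinal.{0} :=
  sInf {α : Ordinal.{0} | Nonempty (↥S ≃o ↥(Iio α))}

/-- `P_κ(λ)`: sets `P ⊆ λ` of order type `< κ` with `P ∩ κ` an ordinal `< κ`. -/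
def PklSet (κ lam : Cardinal.{0}) : Set (Set Ordinal.{0}) :=
  {P | P ⊆ Iio lam.ord ∧ otp P < κ.ord ∧ ∃ α < κ.ord, P ∩ Iio κ.ord = Iio α}

/-- `λ_P`, the order type of `P`. -/
noncomputable def lpt (P : Set Ordinal.{0}) : Ordinal.{0} := otp P

/-- `κ_P = P ∩ κ` (as an ordinal, i.e. the order type of `P ∩ κ`). -/
noncomputable def kpt (κ : Cardinal.{0}) (P : Set Ordinal.{0}) : Ordinal.{0} :=
  otp (P ∩ Iio κ.ord)

/-- `P ≺ Q` iff `P ⊆ Q` and `λ_P < κ_Q`. -/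
def Prec (κ : Cardinal.{0}) (P Q : Set Ordinal.{0}) : Prop := P ⊆ Q ∧ lpt P < kpt κ Q

/-- `U` is `κ`-complete: closed under intersections of families of fewer than `κ` members. -/
def PklComplete (κ : Cardinal.{0}) {X : Type*} (U : Ultrafilter X) : Prop :=
  ∀ γ : Ordinal.{0}, γ.card < κ → ∀ f : ↥(Iio γ) → Set X, (∀ i, f i ∈ U) → (⋂ i, f i) ∈ U

/-- `U` is fine: for every `α < λ`, the set of `P` with `α ∈ P` is in `U`. -/
def PklFine (κ lam : Cardinal.{0}) (U : Ultrafilter ↥(PklSet κ lam)) : Prop :=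
  ∀ α < lam.ord, {P : ↥(PklSet κ lam) | α ∈ P.1} ∈ U

/-- `U` is normal: every choice function on a set in `U` is constant on a set in `U`. -/
def PklNormal (κ lam : Cardinal.{0}) (U : Ultrafilter ↥(PklSet κ lam)) : Prop :=
  ∀ A : Set ↥(PklSet κ lam), A ∈ U → ∀ f : ↥(PklSet κ lam) → Ordinal.{0},
    (∀ P ∈ A, f P ∈ P.1) → ∃ α : Ordinal.{0}, {P | P ∈ A ∧ f P = α} ∈ U

/-- An ordinal is an inaccessible cardinal. -/
def IsInaccOrd (o : Ordinal.{0}) : Prop := o.card.ord = o ∧ o.card.IsInaccessible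

/-- `o` is the least inaccessible (as an ordinal) above `a`. -/
def IsLeastInaccOrdAbove (a o : Ordinal.{0}) : Prop :=
  a < o ∧ IsInaccOrd o ∧ ∀ o', a < o' → IsInaccOrd o' → o ≤ o'

/-- `lam` is the least inaccessible cardinal above `κ`. -/
def IsLeastInaccAbove (κ lam : Cardinal.{0}) : Prop :=
  κ < lam ∧ lam.IsInaccessible ∧ ∀ μ, κ < μ → μ.IsInaccessible → lam ≤ μ

/-- A condition of the Levy collapse `Col(ν, <ρ)`, coded by its graph: a partial function
on `ν × ρ` of size `< ν` with `p(α, β) ∈ β`. -/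
def IsLevyCond (ν ρ : Cardinal.{0}) (s : Set ((Ordinal.{0} × Ordinal.{0}) × Ordinal.{0})) :
    Prop :=
  (∀ x ∈ s, x.1.1 < ν.ord ∧ x.1.2 < ρ.ord ∧ x.2 < x.1.2) ∧
  (∀ x ∈ s, ∀ y ∈ s, x.1 = y.1 → x.2 = y.2) ∧
  Cardinal.mk ↥(Prod.fst '' s) < Cardinal.lift.{1} ν

/-! ### Basic facts about `otp` -/

theorem type_iio (o : Ordinal.{0}) :
    Ordinal.type ((· < ·) : ↥(Iio o) → ↥(Iio o) → Prop) = Ordinal.lift.{1} o :=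
  Ordinal.typein_ordinal o

theorem iio_iso_inj {α β : Ordinal.{0}} (h : Nonempty (↥(Iio α) ≃o ↥(Iio β))) : α = β := by
  obtain ⟨e⟩ := h
  have := Ordinal.type_eq.2 ⟨e.toRelIsoLT⟩
  rw [type_iio, type_iio] at this
  exact Ordinal.lift_inj.1 this

theorem type_eq_lift_otp {S : Set Ordinal.{0}} {δ : Ordinal.{0}} (h : S ⊆ Iio δ) :
    Ordinal.type ((· < ·) : ↥S → ↥S → Prop) = Ordinal.lift.{1} (otp S) := by
  have hle : Ordinal.type ((· < ·) : ↥S → ↥S → Prop) ≤ Ordinal.lift.{1} δ := by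
    rw [← type_iio δ]
    exact Ordinal.type_le_iff'.2 ⟨⟨⟨Set.inclusion h, Set.inclusion_injective h⟩, Iff.rfl⟩⟩
  obtain ⟨α, hα⟩ := Ordinal.mem_range_lift_of_le hle
  have hmem : α ∈ {α : Ordinal.{0} | Nonempty (↥S ≃o ↥(Iio α))} := by
    have : Nonempty (((· < ·) : ↥S → ↥S → Prop) ≃r ((· < ·) : ↥(Iio α) → ↥(Iio α) → Prop)) := by
      rw [← Ordinal.type_eq, type_iio, hα]
    exact ⟨OrderIso.ofRelIsoLT this.some⟩
  have hne : {α : Ordinal.{0} | Nonempty (↥S ≃o ↥(Iio α))}.Nonempty := ⟨α, hmem⟩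
  have hotp : Nonempty (↥S ≃o ↥(Iio (otp S))) := csInf_mem hne
  have : α = otp S := iio_iso_inj ⟨(hmem.some.symm.trans hotp.some)⟩
  rw [← this, hα]

theorem otp_iso {S : Set Ordinal.{0}} {δ : Ordinal.{0}} (h : S ⊆ Iio δ) :
    Nonempty (↥S ≃o ↥(Iio (otp S))) := by
  have : Nonempty (((· < ·) : ↥S → ↥S → Prop) ≃r ((· < ·) : _ → ↥(Iio (otp S)) → Prop)) := by
    rw [← Ordinal.type_eq, type_iio, type_eq_lift_otp h]
  exact ⟨OrderIso.ofRelIsoLT this.some⟩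

theorem otp_eq_of_iso {S : Set Ordinal.{0}} {δ α : Ordinal.{0}} (h : S ⊆ Iio δ)
    (e : ↥S ≃o ↥(Iio α)) : otp S = α :=
  iio_iso_inj ⟨(otp_iso h).some.symm.trans e⟩

theorem otp_Iio (α : Ordinal.{0}) : otp (Iio α) = α :=
  otp_eq_of_iso (le_refl (Iio α)) (OrderIso.refl _)

theorem otp_mono {A B : Set Ordinal.{0}} {δ : Ordinal.{0}} (hB : B ⊆ Iio δ) (hAB : A ⊆ B) :
    otp A ≤ otp B := by
  rw [← Ordinal.lift_le.{1}, ← type_eq_lift_otp (hAB.trans hB), ← type_eq_lift_otp hB]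
  exact Ordinal.type_le_iff'.2 ⟨⟨⟨Set.inclusion hAB, Set.inclusion_injective hAB⟩, Iff.rfl⟩⟩

theorem otp_card {S : Set Ordinal.{0}} {δ : Ordinal.{0}} (h : S ⊆ Iio δ) :
    #↥S = Cardinal.lift.{1} (otp S).card := by
  rw [Cardinal.mk_congr ((otp_iso h).some.toEquiv), Ordinal.mk_Iio_ordinal]

theorem otp_inter_Iio {P : Set Ordinal.{0}} {δ γ β : Ordinal.{0}} (hP : P ⊆ Iio δ)
    (e : ↥P ≃o ↥(Iio γ)) (hβ : β ∈ P) :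
    otp (P ∩ Iio β) = (e ⟨β, hβ⟩).1 := by
  have hsub : P ∩ Iio β ⊆ Iio δ := fun x hx => hP hx.1
  refine otp_eq_of_iso hsub ?_
  set b : ↥(Iio γ) := e ⟨β, hβ⟩ with hb
  have toFun : ∀ x : ↥(P ∩ Iio β), (e ⟨x.1, x.2.1⟩).1 ∈ Iio b.1 := by
    intro x
    have : e ⟨x.1, x.2.1⟩ < b := e.lt_iff_lt.2 (Subtype.mk_lt_mk.2 x.2.2)
    exact Subtype.coe_lt_coe.2 this
  have invP : ∀ y : ↥(Iio b.1), (y : Ordinal) ∈ Iio γ :=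
    fun y => Set.mem_Iio.2 (lt_trans (Set.mem_Iio.1 y.2) (Set.mem_Iio.1 b.2))
  have invFun : ∀ y : ↥(Iio b.1), (e.symm ⟨y.1, invP y⟩).1 ∈ P ∩ Iio β := by
    intro y
    refine ⟨(e.symm ⟨y.1, invP y⟩).2, ?_⟩
    have h1 : e.symm ⟨y.1, invP y⟩ < e.symm b := e.symm.lt_iff_lt.2 (Subtype.mk_lt_mk.2 y.2)
    have h2 : e.symm b = ⟨β, hβ⟩ := by rw [hb, e.symm_apply_apply]
    rw [h2] at h1
    exact Subtype.coe_lt_coe.2 h1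
  refine OrderIso.ofRelIsoLT ⟨⟨fun x => ⟨(e ⟨x.1, x.2.1⟩).1, toFun x⟩,
      fun y => ⟨(e.symm ⟨y.1, invP y⟩).1, invFun y⟩, fun x => ?_, fun y => ?_⟩, ?_⟩
  · ext
    simp
  · ext
    simp
  · intro x y
    simp only [Equiv.coe_fn_mk, Subtype.mk_lt_mk, Subtype.coe_lt_coe, e.lt_iff_lt]

theorem otp_inter_lt {P : Set Ordinal.{0}} {δ β : Ordinal.{0}} (hP : P ⊆ Iio δ)
    (hβ : β ∈ P) : otp (P ∩ Iio β) < otp P := by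
  obtain ⟨e⟩ := otp_iso hP
  rw [otp_inter_Iio hP e hβ]
  exact (e ⟨β, hβ⟩).2

theorem otp_surj {P : Set Ordinal.{0}} {δ o : Ordinal.{0}} (hP : P ⊆ Iio δ)
    (ho : o < otp P) : ∃ β ∈ P, otp (P ∩ Iio β) = o := by
  obtain ⟨e⟩ := otp_iso hP
  refine ⟨(e.symm ⟨o, ho⟩).1, (e.symm ⟨o, ho⟩).2, ?_⟩
  rw [otp_inter_Iio hP e (e.symm ⟨o, ho⟩).2]
  have : (⟨(e.symm ⟨o, ho⟩).1, (e.symm ⟨o, ho⟩).2⟩ : ↥P) = e.symm ⟨o, ho⟩ := rfl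
  rw [this, e.apply_symm_apply]

/-! ### Ultrafilter machinery -/

section Ultra

variable {κ lam : Cardinal.{0}} {U : Ultrafilter ↥(PklSet κ lam)}

theorem memX_lt (P : ↥(PklSet κ lam)) {α : Ordinal.{0}} (h : α ∈ P.1) : α < lam.ord :=
  P.2.1 h

/-- Diagonal intersection. -/
theorem diag_mem (hnorm : PklNormal κ lam U)
    (A : Ordinal.{0} → Set ↥(PklSet κ lam)) (hA : ∀ α < lam.ord, A α ∈ U) :
    {P : ↥(PklSet κ lam) | ∀ α ∈ P.1, P ∈ A α} ∈ U := by
  by_contra h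
  have hB : {P : ↥(PklSet κ lam) | ∀ α ∈ P.1, P ∈ A α}ᶜ ∈ U :=
    (Ultrafilter.compl_mem_iff_notMem).2 h
  classical
  set f : ↥(PklSet κ lam) → Ordinal.{0} := fun P =>
    if hP : ∃ α ∈ P.1, P ∉ A α then hP.choose else 0 with hf
  have hfmem : ∀ P ∈ ({P : ↥(PklSet κ lam) | ∀ α ∈ P.1, P ∈ A α}ᶜ), f P ∈ P.1 := by
    intro P hP
    have hex : ∃ α ∈ P.1, P ∉ A α := by simpa using hP
    rw [hf]
    simp only [hex, dif_pos]
    exact hex.choose_spec.1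
  obtain ⟨α₀, hα₀⟩ := hnorm _ hB f hfmem
  have hne : {P | P ∈ ({P : ↥(PklSet κ lam) | ∀ α ∈ P.1, P ∈ A α}ᶜ) ∧ f P = α₀} ∩ {P | P ∈ A α₀}
      ∈ U := by
    refine (U.toFilter.inter_mem hα₀ ?_)
    apply hA
    obtain ⟨P, hP⟩ := Ultrafilter.nonempty_of_mem hα₀
    have hex : ∃ α ∈ P.1, P ∉ A α := by simpa using hP.1
    have : f P ∈ P.1 := hfmem P hP.1
    rw [hP.2] at this
    exact memX_lt P this
  obtain ⟨P, hP⟩ := Ultrafilter.nonempty_of_mem hne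
  have hex : ∃ α ∈ P.1, P ∉ A α := by simpa using hP.1.1
  have : P ∉ A (f P) := by
    rw [hf]; simp only [hex, dif_pos]; exact hex.choose_spec.2
  rw [hP.1.2] at this
  exact this hP.2

/-- Completeness: all small initial segments are contained in a.e. `P`. -/
theorem seg_subset_mem (hcomp : PklComplete κ U) (hfine : PklFine κ lam U)
    {γ : Ordinal.{0}} (hγκ : γ.card < κ) (hγ : γ ≤ lam.ord) :
    {P : ↥(PklSet κ lam) | Iio γ ⊆ P.1} ∈ U := by
  have h := hcomp γ hγκ (fun i => {P : ↥(PklSet κ lam) | i.1 ∈ P.1})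
    (fun i => hfine i.1 (lt_of_lt_of_le i.2 hγ))
  refine U.toFilter.mem_of_superset h ?_
  intro P hP α hα
  exact (Set.mem_iInter.1 hP) ⟨α, hα⟩

/-- Closure under a unary function. -/
theorem closure1_mem (hnorm : PklNormal κ lam U) (hfine : PklFine κ lam U)
    (g : Ordinal.{0} → Ordinal.{0}) (hg : ∀ α < lam.ord, g α < lam.ord) :
    {P : ↥(PklSet κ lam) | ∀ α ∈ P.1, g α ∈ P.1} ∈ U :=
  diag_mem hnorm (fun α => {P | g α ∈ P.1}) (fun α hα => hfine _ (hg α hα))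

/-- Closure under a binary function. -/
theorem closure2_mem (hnorm : PklNormal κ lam U) (hfine : PklFine κ lam U)
    (g : Ordinal.{0} → Ordinal.{0} → Ordinal.{0})
    (hg : ∀ α < lam.ord, ∀ β < lam.ord, g α β < lam.ord) :
    {P : ↥(PklSet κ lam) | ∀ α ∈ P.1, ∀ β ∈ P.1, g α β ∈ P.1} ∈ U := by
  have h1 : ∀ α < lam.ord, {P : ↥(PklSet κ lam) | ∀ β ∈ P.1, g α β ∈ P.1} ∈ U := by
    intro α hα
    exact closure1_mem hnorm hfine (g α) (hg α hα)
  exact diag_mem hnorm _ h1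

end Ultra

/-! ### Cofinality transfer lemmas -/

theorem inaccOrd_cof {o : Ordinal.{0}} (h : IsInaccOrd o) : o.cof.ord = o := by
  obtain ⟨h1, h2⟩ := h
  have h3 : o.card.ord.cof = o.card := h2.isRegular.cof_ord
  rw [h1] at h3
  rw [h3, h1]

theorem not_inaccOrd_of_cof_lt {o : Ordinal.{0}} (h : o.cof.ord < o) : ¬ IsInaccOrd o :=
  fun hinacc => absurd (inaccOrd_cof hinacc) (ne_of_lt h)

/-- If `Q` has a cofinal subset indexed by `Q ∩ Iio γ` with `γ ∈ Q`, then `otp Q` has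
small cofinality. -/
theorem cof_otp_lt {Q : Set Ordinal.{0}} {δ γ : Ordinal.{0}} (hQ : Q ⊆ Iio δ)
    (hγQ : γ ∈ Q) (c : Ordinal.{0} → Ordinal.{0})
    (hc1 : ∀ ξ ∈ Q ∩ Iio γ, c ξ ∈ Q)
    (hc2 : ∀ x ∈ Q, ∃ ξ ∈ Q ∩ Iio γ, x ≤ c ξ) :
    (otp Q).cof.ord < otp Q := by
  obtain ⟨e⟩ := otp_iso hQ
  set o := otp Q with ho
  set d := otp (Q ∩ Iio γ) with hd
  have hdo : d < o := otp_inter_lt hQ hγQ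
  obtain ⟨eγ⟩ := otp_iso (show Q ∩ Iio γ ⊆ Iio δ from fun x hx => hQ hx.1)
  set j := Ordinal.ToType.mk (o := d)
  set f : d.ToType → Ordinal.{0} := fun i =>
    (e ⟨c ((eγ.symm (j.symm i)).1), hc1 _ (eγ.symm (j.symm i)).2⟩).1 with hfdef
  have hflt : ∀ i, f i < o := fun i => (e _).2
  have holsub : o ≤ Ordinal.lsub f := by
    by_contra hcon
    push_neg at hcon
    obtain ⟨y, hy⟩ : ∃ y : ↥(Iio o), Ordinal.lsub f ≤ y.1 := ⟨⟨Ordinal.lsub f, hcon⟩, le_refl _⟩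
    obtain ⟨ξ, hξ, hle⟩ := hc2 (e.symm y).1 (e.symm y).2
    have : (e.symm y).1 ≤ c ξ := hle
    have h2 : y ≤ e ⟨c ξ, hc1 _ hξ⟩ := by
      have := e.le_iff_le.2 (show e.symm y ≤ ⟨c ξ, hc1 _ hξ⟩ from this)
      rwa [e.apply_symm_apply] at this
    set i := j (eγ ⟨ξ, hξ⟩) with hi
    have heq : eγ.symm (j.symm i) = ⟨ξ, hξ⟩ := by rw [hi, j.symm_apply_apply, eγ.symm_apply_apply]
    have hfi : f i = (e ⟨c ξ, hc1 _ hξ⟩).1 := by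
      rw [hfdef]
      simp only [heq]
    have : y.1 < Ordinal.lsub f := lt_of_le_of_lt (Subtype.coe_le_coe.2 h2)
      (by rw [← hfi]; exact Ordinal.lt_lsub f i)
    exact absurd hy (not_le.2 this)
  have hlsub : Ordinal.lsub f = o :=
    le_antisymm (Ordinal.lsub_le_iff.2 hflt) holsub
  have hcof : o.cof ≤ d.card := by
    have := Ordinal.cof_lsub_le f
    rw [hlsub, Cardinal.mk_toType] at this
    exact this
  calc o.cof.ord ≤ d.card.ord := Cardinal.ord_le_ord.2 hcof
    _ ≤ d := Cardinal.ord_card_le d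
    _ < o := hdo

/-- Conversely, if `otp P` has small cofinality then `P` has a cofinal subset indexed by
an initial part. -/
theorem exists_cofinal_of_cof_lt {P : Set Ordinal.{0}} {δ : Ordinal.{0}} (hP : P ⊆ Iio δ)
    (h : (otp P).cof.ord < otp P) :
    ∃ β ∈ P, ∃ c : Ordinal.{0} → Ordinal.{0},
      (∀ ξ ∈ P ∩ Iio β, c ξ ∈ P) ∧ (∀ x ∈ P, ∃ ξ ∈ P ∩ Iio β, x ≤ c ξ) := by
  classical
  set o := otp P with ho
  obtain ⟨e⟩ := otp_iso hP
  obtain ⟨β, hβ, hotpβ⟩ := otp_surj hP h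
  obtain ⟨ι, f, hlsub, hmk⟩ := Ordinal.exists_lsub_cof o
  have hcards : #↥(P ∩ Iio β) = #(ULift.{1} ι) := by
    rw [otp_card (show P ∩ Iio β ⊆ Iio δ from fun x hx => hP hx.1), hotpβ,
      Cardinal.card_ord, ← hmk, Cardinal.mk_uLift]
  obtain ⟨g⟩ := Cardinal.eq.1 hcards
  refine ⟨β, hβ, fun ξ => if hξ : ξ ∈ P ∩ Iio β then
      (e.symm ⟨f (g ⟨ξ, hξ⟩).down, by rw [mem_Iio, ← ho, ← hlsub]; exact Ordinal.lt_lsub f _⟩).1 else 0,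
    ?_, ?_⟩
  · intro ξ hξ
    simp only [hξ, dif_pos]
    exact (e.symm _).2
  · intro x hx
    have : e ⟨x, hx⟩ < Ordinal.lsub f := by rw [hlsub]; exact (e ⟨x, hx⟩).2
    obtain ⟨i, hi⟩ := Ordinal.lt_lsub_iff.1 this
    refine ⟨(g.symm ⟨i⟩).1, (g.symm ⟨i⟩).2, ?_⟩
    simp only [(g.symm ⟨i⟩).2, dif_pos]
    have hgi : g ⟨(g.symm ⟨i⟩).1, (g.symm ⟨i⟩).2⟩ = ⟨i⟩ := by
      rw [show (⟨(g.symm ⟨i⟩).1, (g.symm ⟨i⟩).2⟩ : ↥(P ∩ Iio β)) = g.symm ⟨i⟩ from rfl,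
        g.apply_symm_apply]
    rw [hgi]
    have hfi : f i ∈ Iio (otp P) := by rw [mem_Iio, ← ho, ← hlsub]; exact Ordinal.lt_lsub f i
    have h3 : e ⟨x, hx⟩ ≤ (⟨f i, hfi⟩ : ↥(Iio (otp P))) := Subtype.coe_le_coe.1 hi
    have h2 := e.symm.le_iff_le.2 h3
    rwa [e.symm_apply_apply] at h2

/-! ### Almost-everywhere regularity -/

section Main

variable {κ lam : Cardinal.{0}} {U : Ultrafilter ↥(PklSet κ lam)}

theorem regular_ae (hlam : IsLeastInaccAbove κ lam)
    (hnorm : PklNormal κ lam U) (hfine : PklFine κ lam U) :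
    {P : ↥(PklSet κ lam) | otp P.1 ≤ (otp P.1).cof.ord} ∈ U := by
  classical
  by_contra hcon
  set B := {P : ↥(PklSet κ lam) | otp P.1 ≤ (otp P.1).cof.ord}ᶜ with hBdef
  have hB : B ∈ U := (Ultrafilter.compl_mem_iff_notMem).2 hcon
  have hdata : ∀ P : ↥(PklSet κ lam), P ∈ B → ∃ β, β ∈ P.1 ∧
      ∃ c : Ordinal.{0} → Ordinal.{0},
        (∀ ξ ∈ P.1 ∩ Iio β, c ξ ∈ P.1) ∧ (∀ x ∈ P.1, ∃ ξ ∈ P.1 ∩ Iio β, x ≤ c ξ) := by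
    intro P hP
    have hlt : (otp P.1).cof.ord < otp P.1 := not_le.1 hP
    obtain ⟨β, hβ, c, hc1, hc2⟩ := exists_cofinal_of_cof_lt P.2.1 hlt
    exact ⟨β, hβ, c, hc1, hc2⟩
  choose! βf hβf cf hc1 hc2 using hdata
  obtain ⟨β, hβU⟩ := hnorm B hB βf hβf
  set B1 := {P | P ∈ B ∧ βf P = β} with hB1def
  have hβlam : β < lam.ord := by
    obtain ⟨P0, hP0⟩ := Ultrafilter.nonempty_of_mem hβU
    have := hβf P0 hP0.1
    rw [hP0.2] at this
    exact memX_lt P0 this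
  have hav : ∀ ξ : ↥(Iio β), ∃ α, {P | (P ∈ B1 ∧ ξ.1 ∈ P.1) ∧ cf P ξ.1 = α} ∈ U := by
    intro ξ
    have hA : {P | P ∈ B1 ∧ ξ.1 ∈ P.1} ∈ U :=
      U.toFilter.inter_mem hβU (hfine ξ.1 (lt_trans ξ.2 hβlam))
    refine hnorm _ hA (fun P => cf P ξ.1) ?_
    rintro P ⟨hPB1, hξP⟩
    exact hc1 P hPB1.1 ξ.1 ⟨hξP, by rw [hPB1.2]; exact ξ.2⟩
  choose av havU using hav
  have havlt : ∀ ξ, av ξ < lam.ord := by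
    intro ξ
    obtain ⟨P0, hP0⟩ := Ultrafilter.nonempty_of_mem (havU ξ)
    have : cf P0 ξ.1 ∈ P0.1 := hc1 P0 hP0.1.1.1 ξ.1 ⟨hP0.1.2, by rw [hP0.1.1.2]; exact ξ.2⟩
    rw [hP0.2] at this
    exact memX_lt P0 this
  set j := Ordinal.ToType.mk (o := β)
  set F : β.ToType → Ordinal.{0} := fun i => av (j.symm i) with hFdef
  set s := Ordinal.lsub F with hsdef
  have hslam : s < lam.ord := by
    refine Ordinal.lsub_lt_ord ?_ (fun i => havlt _)
    rw [Cardinal.mk_toType, hlam.2.1.isRegular.cof_ord]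
    exact Cardinal.lt_ord.1 hβlam
  set A : Ordinal.{0} → Set ↥(PklSet κ lam) := fun ξ =>
    if h : ξ < β then {P | (P ∈ B1 ∧ ξ ∈ P.1) ∧ cf P ξ = av ⟨ξ, h⟩} else univ with hAdef
  have hAU : ∀ ξ < lam.ord, A ξ ∈ U := by
    intro ξ _
    rw [hAdef]
    by_cases h : ξ < β
    · simp only [h, dif_pos]
      exact havU ⟨ξ, h⟩
    · simp only [h, dif_neg, not_false_iff]
      exact Filter.univ_mem
  have hdiag := diag_mem hnorm A hAU
  have hT : B1 ∩ {P : ↥(PklSet κ lam) | ∀ α ∈ P.1, P ∈ A α} ∩ {P : ↥(PklSet κ lam) | s ∈ P.1}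
      ∈ U :=
    U.toFilter.inter_mem (U.toFilter.inter_mem hβU hdiag) (hfine s hslam)
  obtain ⟨P, ⟨⟨hPB1, hPdiag⟩, hPs⟩⟩ := Ultrafilter.nonempty_of_mem hT
  obtain ⟨ξ, hξ, hle⟩ := hc2 P hPB1.1 s hPs
  rw [hPB1.2] at hξ
  have hξβ : ξ < β := hξ.2
  have hPA := hPdiag ξ hξ.1
  have hPA2 : P ∈ {Q : ↥(PklSet κ lam) | (Q ∈ B1 ∧ ξ ∈ Q.1) ∧ cf Q ξ = av ⟨ξ, hξβ⟩} := by
    rw [hAdef] at hPA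
    simpa only [dif_pos hξβ] using hPA
  have hcfval : cf P ξ = av ⟨ξ, hξβ⟩ := hPA2.2
  have hsle : s ≤ av ⟨ξ, hξβ⟩ := by rw [← hcfval]; exact hle
  have hlt : av ⟨ξ, hξβ⟩ < s := by
    have hFv : av ⟨ξ, hξβ⟩ = F (j ⟨ξ, hξβ⟩) := by rw [hFdef]; simp [j.symm_apply_apply]
    rw [hFv, hsdef]
    exact Ordinal.lt_lsub F _
  exact absurd hsle (not_le.2 hlt)

end Main

section Main2

variable {κ lam : Cardinal.{0}} {U : Ultrafilter ↥(PklSet κ lam)}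

theorem strong_limit_step (hlam : IsLeastInaccAbove κ lam)
    (hnorm : PklNormal κ lam U) (hfine : PklFine κ lam U)
    {β : Ordinal.{0}} (hβ : β < lam.ord) :
    {P : ↥(PklSet κ lam) | ((2 : Cardinal.{0}) ^ (otp (P.1 ∩ Iio β)).card).ord < otp P.1}
      ∈ U := by
  classical
  by_contra hcon
  set Bc := {P : ↥(PklSet κ lam) |
    ((2 : Cardinal.{0}) ^ (otp (P.1 ∩ Iio β)).card).ord < otp P.1}ᶜ with hBcdef
  have hBc : Bc ∈ U := (Ultrafilter.compl_mem_iff_notMem).2 hcon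
  have hemb : ∀ P : ↥(PklSet κ lam), P ∈ Bc → Nonempty (↥P.1 ↪ Set ↥(P.1 ∩ Iio β)) := by
    intro P hP
    have hop : otp P.1 ≤ ((2 : Cardinal.{0}) ^ (otp (P.1 ∩ Iio β)).card).ord := not_lt.1 hP
    have hcard : (otp P.1).card ≤ 2 ^ (otp (P.1 ∩ Iio β)).card := by
      have := Ordinal.card_le_card hop
      rwa [Cardinal.card_ord] at this
    have hsub : P.1 ∩ Iio β ⊆ Iio lam.ord := fun x hx => P.2.1 hx.1
    have hmk : #↥P.1 ≤ #(Set ↥(P.1 ∩ Iio β)) := by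
      rw [otp_card P.2.1, Cardinal.mk_set, otp_card hsub, ← Cardinal.lift_two_power]
      exact Cardinal.lift_le.2 hcard
    exact (Cardinal.le_def _ _).1 hmk
  have hjf0 : ∀ P : ↥(PklSet κ lam), ∃ j : ↥P.1 → Set ↥(P.1 ∩ Iio β),
      P ∈ Bc → Function.Injective j := by
    intro P
    by_cases hP : P ∈ Bc
    · obtain ⟨j⟩ := hemb P hP
      exact ⟨j, fun _ => j.injective⟩
    · exact ⟨fun _ => ∅, fun h => absurd h hP⟩
  choose jf hjf using hjf0
  set Mem : ↥(PklSet κ lam) → Ordinal.{0} → Ordinal.{0} → Prop := fun P y ζ =>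
    ∃ (hy : y ∈ P.1) (hζ : ζ ∈ P.1 ∩ Iio β), ⟨ζ, hζ⟩ ∈ jf P ⟨y, hy⟩ with hMemdef
  set I : Ordinal.{0} → Set Ordinal.{0} := fun y =>
    {ζ | ζ < β ∧ {P : ↥(PklSet κ lam) | Mem P y ζ} ∈ U} with hIdef
  have hInj : ∀ y < lam.ord, ∀ y' < lam.ord, y ≠ y' → I y ≠ I y' := by
    intro y hy y' hy' hne hIeq
    set G := (Bc ∩ {P : ↥(PklSet κ lam) | y ∈ P.1}) ∩ {P : ↥(PklSet κ lam) | y' ∈ P.1} with hG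
    have hGU : G ∈ U :=
      U.toFilter.inter_mem (U.toFilter.inter_mem hBc (hfine y hy)) (hfine y' hy')
    have hsepex : ∀ P ∈ G, ∃ ζ, ζ ∈ P.1 ∩ Iio β ∧ ¬(Mem P y ζ ↔ Mem P y' ζ) := by
      rintro P ⟨⟨hPB, hyP⟩, hy'P⟩
      have hjne : jf P ⟨y, hyP⟩ ≠ jf P ⟨y', hy'P⟩ := by
        intro h
        have h2 := hjf P hPB h
        exact hne (congrArg Subtype.val h2)
      obtain ⟨z, hz⟩ := Set.symmDiff_nonempty.2 hjne
      rcases Set.mem_symmDiff.1 hz with ⟨hz1, hz2⟩ | ⟨hz1, hz2⟩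
      · refine ⟨z.1, z.2, fun hiff => ?_⟩
        have hMy : Mem P y z.1 := ⟨hyP, z.2, by rwa [Subtype.eta]⟩
        obtain ⟨hy'2, hζ2, hm⟩ := hiff.1 hMy
        exact hz2 (by rwa [Subtype.eta] at hm)
      · refine ⟨z.1, z.2, fun hiff => ?_⟩
        have hMy' : Mem P y' z.1 := ⟨hy'P, z.2, by rwa [Subtype.eta]⟩
        obtain ⟨hy2, hζ2, hm⟩ := hiff.2 hMy'
        exact hz2 (by rwa [Subtype.eta] at hm)
    choose! sf hsf1 hsf2 using hsepex
    obtain ⟨ζ, hζU⟩ := hnorm G hGU sf (fun P hP => (hsf1 P hP).1)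
    have hH : {P | P ∈ G ∧ sf P = ζ} ∈ U := hζU
    have hζβ : ζ < β := by
      obtain ⟨P0, hP0⟩ := Ultrafilter.nonempty_of_mem hH
      have := (hsf1 P0 hP0.1).2
      rwa [hP0.2] at this
    by_cases hcU : {P : ↥(PklSet κ lam) | Mem P y ζ} ∈ U
    · have hζIy : ζ ∈ I y := ⟨hζβ, hcU⟩
      rw [hIeq] at hζIy
      have hcU' : {P : ↥(PklSet κ lam) | Mem P y' ζ} ∈ U := hζIy.2
      have := U.toFilter.inter_mem (U.toFilter.inter_mem hH hcU) hcU'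
      obtain ⟨P, ⟨⟨hPH, hPy⟩, hPy'⟩⟩ := Ultrafilter.nonempty_of_mem this
      have hx := hsf2 P hPH.1
      rw [hPH.2] at hx
      exact hx ⟨fun _ => hPy', fun _ => hPy⟩
    · have hζIy : ζ ∉ I y := fun hmem => hcU hmem.2
      rw [hIeq] at hζIy
      have hcU' : {P : ↥(PklSet κ lam) | Mem P y' ζ} ∉ U := fun h => hζIy ⟨hζβ, h⟩
      have hcc : {P : ↥(PklSet κ lam) | Mem P y ζ}ᶜ ∈ U :=
        (Ultrafilter.compl_mem_iff_notMem).2 hcU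
      have hcc' : {P : ↥(PklSet κ lam) | Mem P y' ζ}ᶜ ∈ U :=
        (Ultrafilter.compl_mem_iff_notMem).2 hcU'
      have := U.toFilter.inter_mem (U.toFilter.inter_mem hH hcc) hcc'
      obtain ⟨P, ⟨⟨hPH, hPy⟩, hPy'⟩⟩ := Ultrafilter.nonempty_of_mem this
      have hx := hsf2 P hPH.1
      rw [hPH.2] at hx
      exact hx ⟨fun h => absurd h hPy, fun h => absurd h hPy'⟩
  -- build an injection from Iio lam.ord into Set (Iio β)
  set Ifun : ↥(Iio lam.ord) → Set ↥(Iio β) := fun y => {ζ | ζ.1 ∈ I y.1} with hIfdef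
  have hIfInj : Function.Injective Ifun := by
    intro y y' h
    by_contra hne
    have hyne : y.1 ≠ y'.1 := fun hv => hne (Subtype.ext hv)
    refine hInj y.1 y.2 y'.1 y'.2 hyne ?_
    ext ζ
    constructor
    · intro hζ
      have hζβ : ζ < β := hζ.1
      have : (⟨ζ, hζβ⟩ : ↥(Iio β)) ∈ Ifun y := hζ
      rw [h] at this
      exact this
    · intro hζ
      have hζβ : ζ < β := hζ.1
      have : (⟨ζ, hζβ⟩ : ↥(Iio β)) ∈ Ifun y' := hζ
      rw [← h] at this
      exact this
  have hle : #↥(Iio lam.ord) ≤ #(Set ↥(Iio β)) := Cardinal.mk_le_of_injective hIfInj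
  rw [Ordinal.mk_Iio_ordinal, Cardinal.card_ord, Cardinal.mk_set, Ordinal.mk_Iio_ordinal,
    ← Cardinal.lift_two_power, Cardinal.lift_le] at hle
  have hsl : (2 : Cardinal.{0}) ^ β.card < lam := hlam.2.1.isStrongPrelimit (Cardinal.lt_ord.1 hβ)
  exact absurd hle (not_le.2 hsl)

end Main2

section Main3

variable {κ lam : Cardinal.{0}} {U : Ultrafilter ↥(PklSet κ lam)}

theorem no_inacc_between (hlam : IsLeastInaccAbove κ lam) {β : Ordinal.{0}}
    (h1 : κ.ord < β) (h2 : β < lam.ord) : ¬ IsInaccOrd β := by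
  rintro ⟨hc, hi⟩
  have hκ : κ < β.card := by
    rw [← Cardinal.ord_lt_ord, hc]
    exact h1
  have hle : lam ≤ β.card := hlam.2.2 β.card hκ hi
  have : lam.ord ≤ β := by
    calc lam.ord ≤ β.card.ord := Cardinal.ord_le_ord.2 hle
      _ = β := hc
  exact absurd h2 (not_lt.2 this)

theorem between_step (hlam : IsLeastInaccAbove κ lam) (huncount : ℵ₀ < κ)
    (hnorm : PklNormal κ lam U) (hfine : PklFine κ lam U)
    {β : Ordinal.{0}} (hβ : β < lam.ord) :
    {P : ↥(PklSet κ lam) | otp (P.1 ∩ Iio β) ≤ kpt κ P.1 ∨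
      ¬ IsInaccOrd (otp (P.1 ∩ Iio β))} ∈ U := by
  classical
  have hlampos : (0 : Ordinal.{0}) < lam.ord :=
    lt_of_le_of_lt zero_le hβ
  by_cases hβκ : β ≤ κ.ord
  · refine U.toFilter.mem_of_superset Filter.univ_mem ?_
    intro P _
    left
    exact otp_mono (show P.1 ∩ Iio κ.ord ⊆ Iio lam.ord from fun x hx => P.2.1 hx.1)
      (fun x hx => ⟨hx.1, lt_of_lt_of_le hx.2 hβκ⟩)
  push_neg at hβκ
  by_cases hregβ : β.cof.ord < β
  -- singular case
  · set γ := β.cof.ord with hγdef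
    have hγβ : γ < β := hregβ
    have hγlam : γ < lam.ord := lt_trans hγβ hβ
    obtain ⟨ι, f, hlsub, hmk⟩ := Ordinal.exists_lsub_cof β
    have hcards : #↥(Iio γ) = #(ULift.{1} ι) := by
      rw [Ordinal.mk_Iio_ordinal, Cardinal.mk_uLift, hγdef, Cardinal.card_ord, ← hmk]
    obtain ⟨gg⟩ := Cardinal.eq.1 hcards
    set cfun : Ordinal.{0} → Ordinal.{0} := fun ξ =>
      if hξ : ξ < γ then f ((gg ⟨ξ, hξ⟩).down) else 0 with hcfdef
    have hcflt : ∀ ξ, cfun ξ < β := by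
      intro ξ
      rw [hcfdef]
      by_cases hξ : ξ < γ
      · simp only [dif_pos hξ]
        rw [← hlsub]
        exact Ordinal.lt_lsub f _
      · simp only [dif_neg hξ]
        exact lt_of_le_of_lt zero_le hβκ
    set hfun : Ordinal.{0} → Ordinal.{0} := fun x =>
      if x < β then sInf {ξ | ξ < γ ∧ x ≤ cfun ξ} else 0 with hhfdef
    have hSne : ∀ x < β, {ξ | ξ < γ ∧ x ≤ cfun ξ}.Nonempty := by
      intro x hx
      have : x < Ordinal.lsub f := by rw [hlsub]; exact hx
      obtain ⟨i, hi⟩ := Ordinal.lt_lsub_iff.1 this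
      refine ⟨(gg.symm ⟨i⟩).1, (gg.symm ⟨i⟩).2, ?_⟩
      have hcf : cfun (gg.symm ⟨i⟩).1 = f i := by
        show (if hξ : (gg.symm ⟨i⟩).1 < γ then f ((gg ⟨(gg.symm ⟨i⟩).1, hξ⟩).down) else 0) = f i
        rw [dif_pos (show (gg.symm ⟨i⟩).1 < γ from (gg.symm ⟨i⟩).2)]
        exact congrArg (fun w => f (ULift.down w)) (gg.apply_symm_apply ⟨i⟩)
      rw [hcf]
      exact hi
    have hhflt : ∀ x, hfun x < lam.ord := by
      intro x
      rw [hhfdef]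
      by_cases hx : x < β
      · simp only [if_pos hx]
        have := csInf_mem (hSne x hx)
        exact lt_trans (lt_trans this.1 hγβ) hβ
      · simp only [if_neg hx]
        exact hlampos
    have hC : (({P : ↥(PklSet κ lam) | ∀ α ∈ P.1, cfun α ∈ P.1} ∩
        {P : ↥(PklSet κ lam) | ∀ α ∈ P.1, hfun α ∈ P.1}) ∩
        {P : ↥(PklSet κ lam) | γ ∈ P.1}) ∈ U := by
      refine U.toFilter.inter_mem (U.toFilter.inter_mem ?_ ?_) (hfine γ hγlam)
      · exact closure1_mem hnorm hfine cfun (fun α _ => lt_trans (hcflt α) hβ)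
      · exact closure1_mem hnorm hfine hfun (fun α _ => hhflt α)
    refine U.toFilter.mem_of_superset hC ?_
    rintro P ⟨⟨hPc, hPh⟩, hPγ⟩
    right
    have hQsub : P.1 ∩ Iio β ⊆ Iio lam.ord := fun z hz => P.2.1 hz.1
    refine not_inaccOrd_of_cof_lt (cof_otp_lt hQsub ⟨hPγ, hγβ⟩ cfun ?_ ?_)
    · rintro ξ ⟨hξQ, hξγ⟩
      exact ⟨hPc ξ hξQ.1, hcflt ξ⟩
    · rintro z ⟨hzP, hzβ⟩
      have hmem := csInf_mem (hSne z hzβ)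
      set ξ := sInf {ξ | ξ < γ ∧ z ≤ cfun ξ} with hξdef
      have hfz : hfun z = ξ := by
        rw [hhfdef]
        exact if_pos hzβ
      refine ⟨ξ, ⟨⟨?_, lt_trans hmem.1 hγβ⟩, hmem.1⟩, hmem.2⟩
      have := hPh z hzP
      rwa [hfz] at this
  -- regular (hence non-strong-limit) case
  · push_neg at hregβ
    have hββ : β.cof.ord = β := le_antisymm (Ordinal.ord_cof_le β) hregβ
    have hcardβ : β.card.ord = β := by
      have h1 : β.cof.ord ≤ β.card.ord := Cardinal.ord_le_ord.2 (Ordinal.cof_le_card β)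
      have h2 : β.card.ord ≤ β := Cardinal.ord_card_le β
      rw [hββ] at h1
      exact le_antisymm h2 h1
    set b := β.card with hbdef
    have hbω : ℵ₀ < b := by
      rw [← Cardinal.ord_lt_ord, hcardβ]
      calc Cardinal.ord ℵ₀ ≤ κ.ord := Cardinal.ord_le_ord.2 (le_of_lt huncount)
        _ < β := hβκ
    have hcofb : β.cof = b := Cardinal.ord_injective (by rw [hββ, hcardβ])
    have hbreg : b.IsRegular := by
      refine ⟨le_of_lt hbω, ?_⟩
      rw [hcardβ, hcofb]
    have hnotsl : ¬ b.IsStrongLimit := by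
      intro hsl
      refine no_inacc_between hlam hβκ hβ ⟨hcardβ, hbω, hbreg.2, hsl.2⟩
    have hbne : b ≠ 0 := by
      intro h
      rw [h] at hbω
      exact absurd hbω (by simp)
    obtain ⟨x, hxb, hx2⟩ : ∃ x < b, ¬((2 : Cardinal.{0}) ^ x < b) := by
      by_contra hall
      push_neg at hall
      exact hnotsl ⟨hbne, hall⟩
    have hx2' : b ≤ 2 ^ x := not_lt.1 hx2
    have hxβ : x.ord < β := by rw [← hcardβ]; exact Cardinal.ord_lt_ord.2 hxb
    have hxlam : x.ord < lam.ord := lt_trans hxβ hβ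
    -- an injection from Iio β into Set (Iio x.ord)
    have hmkle : #↥(Iio β) ≤ #(Set ↥(Iio x.ord)) := by
      rw [Ordinal.mk_Iio_ordinal, Cardinal.mk_set, Ordinal.mk_Iio_ordinal, Cardinal.card_ord,
        ← Cardinal.lift_two_power]
      exact Cardinal.lift_le.2 (le_trans hx2' (le_refl _))
    obtain ⟨iemb⟩ := (Cardinal.le_def _ _).1 hmkle
    set d : Ordinal.{0} → Ordinal.{0} → Ordinal.{0} := fun y y' =>
      if h : ∃ h : y < β ∧ y' < β, iemb ⟨y, h.1⟩ ≠ iemb ⟨y', h.2⟩ then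
        ((Set.symmDiff_nonempty.2 h.choose_spec).some).1 else 0 with hddef
    have hd_spec : ∀ y y' (hy : y < β) (hy' : y' < β),
        iemb ⟨y, hy⟩ ≠ iemb ⟨y', hy'⟩ →
        ∃ hζ : d y y' < x.ord,
          ((⟨d y y', hζ⟩ : ↥(Iio x.ord)) ∈ iemb ⟨y, hy⟩ ↔
           (⟨d y y', hζ⟩ : ↥(Iio x.ord)) ∉ iemb ⟨y', hy'⟩) := by
      intro y y' hy hy' hne
      have hex : ∃ h : y < β ∧ y' < β, iemb ⟨y, h.1⟩ ≠ iemb ⟨y', h.2⟩ := ⟨⟨hy, hy'⟩, hne⟩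
      have hdval : d y y' = ((Set.symmDiff_nonempty.2 hex.choose_spec).some).1 := by
        rw [hddef]; simp only [dif_pos hex]
      set z := (Set.symmDiff_nonempty.2 hex.choose_spec).some with hzdef
      have hzmem := (Set.symmDiff_nonempty.2 hex.choose_spec).some_mem
      have hzlt : d y y' < x.ord := by rw [hdval]; exact z.2
      have hzeq : (⟨d y y', hzlt⟩ : ↥(Iio x.ord)) = z := Subtype.ext hdval
      refine ⟨hzlt, ?_⟩
      rw [hzeq]
      rcases Set.mem_symmDiff.1 hzmem with ⟨hz1, hz2⟩ | ⟨hz1, hz2⟩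
      · exact ⟨fun _ => hz2, fun _ => hz1⟩
      · exact ⟨fun h => absurd h hz2, fun h => absurd hz1 h⟩
    have hdlt : ∀ y < lam.ord, ∀ y' < lam.ord, d y y' < lam.ord := by
      intro y _ y' _
      rw [hddef]
      by_cases h : ∃ h : y < β ∧ y' < β, iemb ⟨y, h.1⟩ ≠ iemb ⟨y', h.2⟩
      · simp only [dif_pos h]
        exact lt_trans (lt_trans ((Set.symmDiff_nonempty.2 h.choose_spec).some).2 hxβ) hβ
      · simp only [dif_neg h]
        exact hlampos
    have hC : ({P : ↥(PklSet κ lam) | ∀ α ∈ P.1, ∀ α' ∈ P.1, d α α' ∈ P.1} ∩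
        {P : ↥(PklSet κ lam) | x.ord ∈ P.1}) ∈ U :=
      U.toFilter.inter_mem (closure2_mem hnorm hfine d hdlt) (hfine x.ord hxlam)
    refine U.toFilter.mem_of_superset hC ?_
    rintro P ⟨hPd, hPx⟩
    right
    rintro ⟨hoc, hoi⟩
    set Q := P.1 ∩ Iio β with hQdef
    have hQsub : Q ⊆ Iio lam.ord := fun z hz => P.2.1 hz.1
    set o := otp Q with hodef
    set c' := o.card with hc'def
    have hxQ : x.ord ∈ Q := ⟨hPx, hxβ⟩
    have hx'lt : otp (Q ∩ Iio x.ord) < o := otp_inter_lt hQsub hxQ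
    set x' := otp (Q ∩ Iio x.ord) with hx'def
    -- injection from Q into Set (Q ∩ Iio x.ord)
    set jmap : ↥Q → Set ↥(Q ∩ Iio x.ord) := fun y =>
      {ζ | (⟨ζ.1, ζ.2.2⟩ : ↥(Iio x.ord)) ∈ iemb ⟨y.1, y.2.2⟩} with hjdef
    have hjinj : Function.Injective jmap := by
      intro y y' heq
      by_contra hne
      have hvne : y.1 ≠ y'.1 := fun hv => hne (Subtype.ext hv)
      have hine : iemb ⟨y.1, y.2.2⟩ ≠ iemb ⟨y'.1, y'.2.2⟩ := by
        intro h
        have h2 := iemb.injective h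
        exact hvne (Subtype.mk_eq_mk.1 h2)
      obtain ⟨hζ, hiff⟩ := hd_spec y.1 y'.1 y.2.2 y'.2.2 hine
      set ζ0 := d y.1 y'.1 with hζ0def
      have hζ0P : ζ0 ∈ P.1 := hPd y.1 y.2.1 y'.1 y'.2.1
      have hζ0Q : ζ0 ∈ Q ∩ Iio x.ord := ⟨⟨hζ0P, lt_trans hζ hxβ⟩, hζ⟩
      have hAB : ((⟨ζ0, hζ0Q⟩ : ↥(Q ∩ Iio x.ord)) ∈ jmap y) ↔
          ((⟨ζ0, hζ0Q⟩ : ↥(Q ∩ Iio x.ord)) ∈ jmap y') := by rw [heq]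
      have hA : ((⟨ζ0, hζ0Q⟩ : ↥(Q ∩ Iio x.ord)) ∈ jmap y) ↔
          ((⟨ζ0, hζ⟩ : ↥(Iio x.ord)) ∈ iemb ⟨y.1, y.2.2⟩) := Iff.rfl
      have hB : ((⟨ζ0, hζ0Q⟩ : ↥(Q ∩ Iio x.ord)) ∈ jmap y') ↔
          ((⟨ζ0, hζ⟩ : ↥(Iio x.ord)) ∈ iemb ⟨y'.1, y'.2.2⟩) := Iff.rfl
      by_cases hm : (⟨ζ0, hζ⟩ : ↥(Iio x.ord)) ∈ iemb ⟨y'.1, y'.2.2⟩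
      · exact (hiff.1 (hA.1 (hAB.2 (hB.2 hm)))) hm
      · exact hm (hB.1 (hAB.1 (hA.2 (hiff.2 hm))))
    have hmkQ : #↥Q ≤ #(Set ↥(Q ∩ Iio x.ord)) := Cardinal.mk_le_of_injective hjinj
    have hQx'sub : Q ∩ Iio x.ord ⊆ Iio lam.ord := fun z hz => hQsub hz.1
    rw [otp_card hQsub, Cardinal.mk_set, otp_card hQx'sub, ← Cardinal.lift_two_power,
      Cardinal.lift_le] at hmkQ
    -- now hmkQ : o.card ≤ 2 ^ x'.card ; but x'.card < c' and c' strong limit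
    have hx'c : x'.card < c' := by
      rw [hc'def]
      exact Cardinal.lt_ord.1 (by rw [hoc]; exact hx'lt)
    have hsl := hoi.isStrongLimit
    have := hsl.2 hx'c
    exact absurd hmkQ (not_le.2 this)

end Main3

/-- If `κ` is regular uncountable, `λ` the least inaccessible above `κ`, and `U`
a `κ`-complete normal fine ultrafilter on `P_κ(λ)`, then
`D = {P : λ_P is the least inaccessible above κ_P}` belongs to `U`. -/
theorem least_inaccessible_set_mem
    (κ lam : Cardinal.{0}) (hreg : κ.IsRegular) (huncount : ℵ₀ < κ)
    (hlam : IsLeastInaccAbove κ lam)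
    (U : Ultrafilter ↥(PklSet κ lam))
    (hcomp : PklComplete κ U) (hnorm : PklNormal κ lam U) (hfine : PklFine κ lam U) :
    {P : ↥(PklSet κ lam) | IsLeastInaccOrdAbove (kpt κ P.1) (lpt P.1)} ∈ U := by
  have hκlam : κ.ord < lam.ord := Cardinal.ord_lt_ord.2 hlam.1
  have hωlam : (Ordinal.omega0 : Ordinal.{0}) + 1 ≤ lam.ord := by
    rw [Ordinal.add_one_eq_succ, Order.succ_le_iff]
    rw [← Cardinal.ord_aleph0]
    exact Cardinal.ord_lt_ord.2 (lt_trans huncount hlam.1)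
  have hS1 : {P : ↥(PklSet κ lam) | κ.ord ∈ P.1} ∈ U := hfine κ.ord hκlam
  have hS2 : {P : ↥(PklSet κ lam) | Iio (Ordinal.omega0 + 1) ⊆ P.1} ∈ U := by
    refine seg_subset_mem hcomp hfine ?_ hωlam
    have : (Ordinal.omega0 + 1 : Ordinal.{0}).card = ℵ₀ := by simp
    rw [this]
    exact huncount
  have hS3 := regular_ae hlam hnorm hfine (U := U)
  set FA : Ordinal.{0} → Set ↥(PklSet κ lam) := fun β =>
    {P : ↥(PklSet κ lam) | ((2 : Cardinal.{0}) ^ (otp (P.1 ∩ Iio β)).card).ord < otp P.1}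
    with hFAdef
  have hS4 : {P : ↥(PklSet κ lam) | ∀ β ∈ P.1, P ∈ FA β} ∈ U :=
    diag_mem hnorm FA (fun β hβ => strong_limit_step hlam hnorm hfine hβ)
  set EA : Ordinal.{0} → Set ↥(PklSet κ lam) := fun β =>
    {P : ↥(PklSet κ lam) | otp (P.1 ∩ Iio β) ≤ kpt κ P.1 ∨
      ¬ IsInaccOrd (otp (P.1 ∩ Iio β))} with hEAdef
  have hS5 : {P : ↥(PklSet κ lam) | ∀ β ∈ P.1, P ∈ EA β} ∈ U :=
    diag_mem hnorm EA (fun β hβ => between_step hlam huncount hnorm hfine hβ)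
  have hBig : ((({P : ↥(PklSet κ lam) | κ.ord ∈ P.1} ∩
      {P : ↥(PklSet κ lam) | Iio (Ordinal.omega0 + 1) ⊆ P.1}) ∩
      ({P : ↥(PklSet κ lam) | otp P.1 ≤ (otp P.1).cof.ord} ∩
       {P : ↥(PklSet κ lam) | ∀ β ∈ P.1, P ∈ FA β})) ∩
      {P : ↥(PklSet κ lam) | ∀ β ∈ P.1, P ∈ EA β}) ∈ U :=
    U.toFilter.inter_mem (U.toFilter.inter_mem (U.toFilter.inter_mem hS1 hS2)
      (U.toFilter.inter_mem hS3 hS4)) hS5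
  refine U.toFilter.mem_of_superset hBig ?_
  rintro P ⟨⟨⟨h1, h2⟩, ⟨h3, h4⟩⟩, h5⟩
  set o := otp P.1 with hodef
  set k := kpt κ P.1 with hkdef
  -- k < o
  have hko : k < o := otp_inter_lt P.2.1 h1
  -- ω < o
  have hωo : Ordinal.omega0 < o := by
    have hle : Ordinal.omega0 + 1 ≤ o := by
      have := otp_mono P.2.1 h2
      rwa [otp_Iio] at this
    refine lt_of_lt_of_le ?_ hle
    rw [Ordinal.add_one_eq_succ]
    exact Order.lt_succ _
  -- o is a regular cardinal
  have hchain1 : o.cof.ord ≤ o.card.ord := Cardinal.ord_le_ord.2 (Ordinal.cof_le_card o)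
  have hchain2 : o.card.ord ≤ o := Cardinal.ord_card_le o
  have hcard : o.card.ord = o := le_antisymm hchain2 (le_trans h3 hchain1)
  have hcofeq : o.cof.ord = o := le_antisymm (Ordinal.ord_cof_le o) h3
  have hcof : o.cof = o.card := Cardinal.ord_injective (by rw [hcard, hcofeq])
  have hℵo : ℵ₀ < o.card := by
    rw [← Cardinal.ord_lt_ord, hcard, Cardinal.ord_aleph0]
    exact hωo
  have hregcard : o.card.IsRegular := by
    refine ⟨le_of_lt hℵo, ?_⟩
    rw [hcard, hcof]
  have hsl : o.card.IsStrongLimit := by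
    refine ⟨ne_of_gt (lt_trans Cardinal.aleph0_pos hℵo), ?_⟩
    intro x hx
    have hxo : x.ord < o := by rw [← hcard]; exact Cardinal.ord_lt_ord.2 hx
    obtain ⟨β, hβP, hβeq⟩ := otp_surj P.2.1 hxo
    have := h4 β hβP
    rw [hFAdef] at this
    have hlt : ((2 : Cardinal.{0}) ^ (otp (P.1 ∩ Iio β)).card).ord < o := this
    rw [hβeq, Cardinal.card_ord] at hlt
    rw [← Cardinal.ord_lt_ord, hcard]
    exact hlt
  have hinacc : IsInaccOrd o := ⟨hcard, hℵo, hregcard.2, hsl.2⟩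
  -- minimality
  refine ⟨hko, hinacc, ?_⟩
  intro o' ho'k ho'in
  by_contra hcon
  push_neg at hcon
  obtain ⟨β, hβP, hβeq⟩ := otp_surj P.2.1 hcon
  have h5β := h5 β hβP
  rw [hEAdef] at h5β
  rcases h5β with hle | hni
  · rw [hβeq] at hle
    exact absurd (lt_of_lt_of_le ho'k hle) (lt_irrefl k)
  · rw [hβeq] at hni
    exact hni ho'in
end

section
/- Let κ be an infinite regular cardinal and let λ > κ be an inaccessible cardinal. Then every antichain (set of pairwise incompatible conditions) in the Levy collapse Col(κ, <λ) has cardinality strictly less than λ. -/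
open Set Cardinal

section LevyHelpers

lemma small_of_mk_le {X : Type 1} {c : Cardinal.{0}} (h : Cardinal.mk X ≤ Cardinal.lift.{1} c) :
    Small.{0} X := by
  obtain ⟨f⟩ : Nonempty (X ↪ ULift.{1} c.out) := by
    rw [← Cardinal.lift_mk_le']
    simpa using h
  exact small_of_injective f.injective

lemma exists_strict_bound (c : Cardinal.{0}) (hc : c.IsRegular) (A : Set Ordinal.{0})
    (hA : Cardinal.mk ↥A < Cardinal.lift.{1} c) (hlt : ∀ a ∈ A, a < c.ord) :
    ∃ γ, γ < c.ord ∧ ∀ a ∈ A, a < γ := by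
  have hsmall : Small.{0} ↥A := small_of_mk_le hA.le
  set f : Shrink ↥A → Ordinal.{0} := fun i => ((equivShrink ↥A).symm i : Ordinal) with hf
  have hcard : Cardinal.mk (Shrink ↥A) < c.ord.cof := by
    rw [hc.cof_eq]
    have h2 : Cardinal.lift.{1} (Cardinal.mk (Shrink ↥A)) = Cardinal.mk ↥A :=
      Cardinal.lift_mk_shrink'' ↥A
    rw [← Cardinal.lift_lt.{_,1}]
    rwa [h2]
  refine ⟨Ordinal.lsub f, Ordinal.lsub_lt_ord hcard fun i => hlt _ ((equivShrink ↥A).symm i).2, ?_⟩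
  intro a ha
  have := Ordinal.lt_lsub f (equivShrink ↥A ⟨a, ha⟩)
  simpa [hf] using this

lemma count_lt (κ lam : Cardinal.{0}) (hlam : lam.IsInaccessible)
    (hkl : κ < lam) (γ : Ordinal.{0}) (hγ : γ < lam.ord) :
    Cardinal.mk ↥{s : Set ((Ordinal.{0} × Ordinal.{0}) × Ordinal.{0}) |
      IsLevyCond κ lam s ∧ ∀ x ∈ s, x.1.2 < γ} < Cardinal.lift.{1} lam := by
  set D : Set ((Ordinal.{0} × Ordinal.{0}) × Ordinal.{0}) :=
    (Iio κ.ord ×ˢ Iio γ) ×ˢ Iio γ with hD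
  have hsub : {s : Set ((Ordinal.{0} × Ordinal.{0}) × Ordinal.{0}) |
      IsLevyCond κ lam s ∧ ∀ x ∈ s, x.1.2 < γ} ⊆ 𝒫 D := by
    rintro s ⟨hs, hbd⟩ x hx
    exact ⟨⟨(hs.1 x hx).1, hbd x hx⟩, lt_trans (hs.1 x hx).2.2 (hbd x hx)⟩
  have hDle : Cardinal.mk ↥D ≤ Cardinal.lift.{1} (κ * γ.card * γ.card) := by
    have e1 : Cardinal.mk ↥D = (Cardinal.lift.{1} κ * Cardinal.lift.{1} γ.card) *
        Cardinal.lift.{1} γ.card := by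
      rw [hD]
      rw [Cardinal.mk_congr (Equiv.Set.prod _ _)]
      rw [Cardinal.mk_prod, Cardinal.mk_congr (Equiv.Set.prod _ _), Cardinal.mk_prod]
      simp [Ordinal.mk_Iio_ordinal, Cardinal.card_ord]
    rw [e1, ← Cardinal.lift_mul, ← Cardinal.lift_mul]
  have hμ : κ * γ.card * γ.card < lam := by
    have h0 : ℵ₀ ≤ lam := hlam.1.le
    have hγc : γ.card < lam := (Cardinal.lt_ord.mp hγ)
    exact Cardinal.mul_lt_of_lt h0 (Cardinal.mul_lt_of_lt h0 hkl hγc) hγc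
  calc Cardinal.mk ↥{s : Set ((Ordinal.{0} × Ordinal.{0}) × Ordinal.{0}) |
      IsLevyCond κ lam s ∧ ∀ x ∈ s, x.1.2 < γ}
      ≤ Cardinal.mk ↥(𝒫 D) := Cardinal.mk_le_mk_of_subset hsub
    _ = 2 ^ Cardinal.mk ↥D := Cardinal.mk_powerset D
    _ ≤ 2 ^ Cardinal.lift.{1} (κ * γ.card * γ.card) :=
        Cardinal.power_le_power_left two_ne_zero hDle
    _ = Cardinal.lift.{1} (2 ^ (κ * γ.card * γ.card)) := (Cardinal.lift_two_power _).symm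
    _ < Cardinal.lift.{1} lam := Cardinal.lift_lt.mpr (hlam.isStrongPrelimit hμ)

noncomputable def Gf (N : Ordinal.{0} → Ordinal.{0}) (i : Ordinal.{0}) : Ordinal.{0} :=
  sSup (Set.range fun j : Iio i => max (Gf N j.1 + 1) (N (Gf N j.1)))
termination_by i
decreasing_by exact j.2

lemma Gf_def (N : Ordinal.{0} → Ordinal.{0}) (i : Ordinal.{0}) :
    Gf N i = sSup (Set.range fun j : Iio i => max (Gf N j.1 + 1) (N (Gf N j.1))) := by
  rw [Gf]

lemma Gf_bdd (N : Ordinal.{0} → Ordinal.{0}) (i : Ordinal.{0}) :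
    BddAbove (Set.range fun j : Iio i => max (Gf N j.1 + 1) (N (Gf N j.1))) :=
  Ordinal.bddAbove_of_small

lemma Gf_le (N : Ordinal.{0} → Ordinal.{0}) {i j : Ordinal.{0}} (h : j < i) :
    max (Gf N j + 1) (N (Gf N j)) ≤ Gf N i := by
  rw [Gf_def N i]
  exact le_csSup (Gf_bdd N i) ⟨⟨j, h⟩, rfl⟩

lemma Gf_mono (N : Ordinal.{0} → Ordinal.{0}) {i j : Ordinal.{0}} (h : j < i) :
    Gf N j < Gf N i :=
  lt_of_lt_of_le (lt_of_lt_of_le (lt_add_one _) (le_max_left _ _)) (Gf_le N h)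

lemma Gf_N_le (N : Ordinal.{0} → Ordinal.{0}) {i j : Ordinal.{0}} (h : j < i) :
    N (Gf N j) ≤ Gf N i :=
  le_trans (le_max_right _ _) (Gf_le N h)

lemma Gf_lt_lam (κ lam : Cardinal.{0}) (hlam : lam.IsInaccessible) (hkl : κ < lam)
    (N : Ordinal.{0} → Ordinal.{0}) (hN : ∀ γ, γ < lam.ord → N γ < lam.ord) :
    ∀ i, i ≤ κ.ord → Gf N i < lam.ord := by
  intro i
  induction i using Ordinal.induction with
  | h i IH =>
    intro hi
    set f : ↥(Iio i) → Ordinal.{0} := fun j => max (Gf N j.1 + 1) (N (Gf N j.1)) with hf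
    have hlim : Order.IsSuccLimit lam.ord := Cardinal.isSuccLimit_ord hlam.1.le
    have hflt : ∀ j : ↥(Iio i), f j < lam.ord := by
      intro j
      have hG : Gf N j.1 < lam.ord := IH j.1 j.2 (le_of_lt (lt_of_lt_of_le j.2 hi))
      have h1 : Gf N j.1 + 1 < lam.ord := by
        rw [Ordinal.add_one_eq_succ]; exact hlim.succ_lt hG
      exact max_lt h1 (hN _ hG)
    have hcard : Cardinal.mk ↥(Set.range f) < Cardinal.lift.{1} lam := by
      calc Cardinal.mk ↥(Set.range f) ≤ Cardinal.mk ↥(Iio i) := Cardinal.mk_range_le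
        _ = Cardinal.lift.{1} i.card := Ordinal.mk_Iio_ordinal i
        _ ≤ Cardinal.lift.{1} κ := by
            exact Cardinal.lift_le.mpr (by simpa using Ordinal.card_le_card hi)
        _ < Cardinal.lift.{1} lam := Cardinal.lift_lt.mpr hkl
    obtain ⟨γ, hγ, hγb⟩ := exists_strict_bound lam hlam.isRegular (Set.range f) hcard
      (by rintro a ⟨j, rfl⟩; exact hflt j)
    rw [Gf_def]
    exact lt_of_le_of_lt (csSup_le' fun a ha => (hγb a ha).le) hγ

lemma mk_cond_lt {κ lam : Cardinal.{0}}
    {s : Set ((Ordinal.{0} × Ordinal.{0}) × Ordinal.{0})} (hs : IsLevyCond κ lam s) :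
    Cardinal.mk ↥s < Cardinal.lift.{1} κ := by
  refine lt_of_le_of_lt (Cardinal.mk_le_of_injective
    (f := fun x : ↥s => (⟨x.1.1, ⟨x.1, x.2, rfl⟩⟩ : ↥(Prod.fst '' s))) ?_) hs.2.2
  intro a b hab
  have h1 : a.1.1 = b.1.1 := congrArg Subtype.val hab
  have h2 : a.1.2 = b.1.2 := hs.2.1 a.1 a.2 b.1 b.2 h1
  exact Subtype.ext (Prod.ext h1 h2)

end LevyHelpers

/-- for `λ > κ` inaccessible, every antichain of `Col(κ, <λ)` has size `< λ`. -/
theorem levy_antichain_small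
    (κ lam : Cardinal.{0}) (hreg : κ.IsRegular) (hkl : κ < lam) (hlam : lam.IsInaccessible)
    (T : Set (Set ((Ordinal.{0} × Ordinal.{0}) × Ordinal.{0})))
    (hT : ∀ s ∈ T, IsLevyCond κ lam s)
    (hanti : ∀ s ∈ T, ∀ t ∈ T, s ≠ t → ¬ IsLevyCond κ lam (s ∪ t)) :
    Cardinal.mk ↥T < Cardinal.lift.{1} lam := by
  by_contra hcon
  push_neg at hcon
  -- hcon : lift lam ≤ mk T
  have hκ0 : ℵ₀ ≤ κ := hreg.aleph0_le
  have hlimκ : Order.IsSuccLimit κ.ord := Cardinal.isSuccLimit_ord hκ0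
  -- bound function for elements of T
  have hbdex : ∀ p : Set ((Ordinal.{0} × Ordinal.{0}) × Ordinal.{0}),
      ∃ δ, p ∈ T → δ < lam.ord ∧ ∀ x ∈ p, x.1.2 < δ := by
    intro p
    by_cases hp : p ∈ T
    · have hlc := hT p hp
      have hmk : Cardinal.mk ↥p < Cardinal.lift.{1} lam :=
        lt_trans (mk_cond_lt hlc) (Cardinal.lift_lt.mpr hkl)
      obtain ⟨δ, hδ, hδb⟩ := exists_strict_bound lam hlam.isRegular
        (Set.range fun x : ↥p => x.1.1.2)
        (lt_of_le_of_lt Cardinal.mk_range_le hmk)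
        (by rintro a ⟨x, rfl⟩; exact (hlc.1 x.1 x.2).2.1)
      exact ⟨δ, fun _ => ⟨hδ, fun x hx => hδb _ ⟨⟨x, hx⟩, rfl⟩⟩⟩
    · exact ⟨0, fun h => absurd h hp⟩
  choose bd hbd using hbdex
  -- witness function
  have hwitex : ∀ (γ : Ordinal.{0}) (r : Set ((Ordinal.{0} × Ordinal.{0}) × Ordinal.{0})),
      ∃ q, (∃ p ∈ T, {x ∈ p | x.1.2 < γ} = r) → q ∈ T ∧ {x ∈ q | x.1.2 < γ} = r := by
    intro γ r
    by_cases h : ∃ p ∈ T, {x ∈ p | x.1.2 < γ} = r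
    · obtain ⟨p, hp1, hp2⟩ := h
      exact ⟨p, fun _ => ⟨hp1, hp2⟩⟩
    · exact ⟨∅, fun hh => absurd hh h⟩
  choose wit hwit using hwitex
  -- the function N
  have hNex : ∀ γ : Ordinal.{0}, ∃ δ, γ < lam.ord → δ < lam.ord ∧
      ∀ r, (IsLevyCond κ lam r ∧ ∀ x ∈ r, x.1.2 < γ) →
        (∃ p ∈ T, {x ∈ p | x.1.2 < γ} = r) → bd (wit γ r) < δ := by
    intro γ
    by_cases hγ : γ < lam.ord
    · set A : Set Ordinal.{0} := (fun r => bd (wit γ r)) ''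
        ({r | IsLevyCond κ lam r ∧ ∀ x ∈ r, x.1.2 < γ} ∩
          {r | ∃ p ∈ T, {x ∈ p | x.1.2 < γ} = r}) with hA
      have hAcard : Cardinal.mk ↥A < Cardinal.lift.{1} lam := by
        refine lt_of_le_of_lt Cardinal.mk_image_le ?_
        refine lt_of_le_of_lt (Cardinal.mk_le_mk_of_subset Set.inter_subset_left) ?_
        exact count_lt κ lam hlam hkl γ hγ
      have hAlt : ∀ a ∈ A, a < lam.ord := by
        rintro a ⟨r, ⟨hr1, hr2⟩, rfl⟩
        exact (hbd (wit γ r) ((hwit γ r) hr2).1).1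
      obtain ⟨δ, hδ, hδb⟩ := exists_strict_bound lam hlam.isRegular A hAcard hAlt
      exact ⟨δ, fun _ => ⟨hδ, fun r hr1 hr2 => hδb _ ⟨r, ⟨hr1, hr2⟩, rfl⟩⟩⟩
    · exact ⟨0, fun h => absurd h hγ⟩
  choose N hN using hNex
  have hNlt : ∀ γ, γ < lam.ord → N γ < lam.ord := fun γ h => (hN γ h).1
  -- the sequence G and its limit γ*
  have hGlt : ∀ i, i ≤ κ.ord → Gf N i < lam.ord := Gf_lt_lam κ lam hlam hkl N hNlt
  set γs : Ordinal.{0} := Gf N κ.ord with hγs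
  have hγslt : γs < lam.ord := hGlt κ.ord le_rfl
  -- pick p ∈ T with unbounded support below γ*
  have hnotsub : ¬ T ⊆ {s | IsLevyCond κ lam s ∧ ∀ x ∈ s, x.1.2 < γs} := by
    intro hsub
    exact absurd (le_trans hcon (Cardinal.mk_le_mk_of_subset hsub))
      (not_le.mpr (count_lt κ lam hlam hkl γs hγslt))
  obtain ⟨p, hpT, hpbig⟩ := Set.not_subset.mp hnotsub
  have hp : IsLevyCond κ lam p := hT p hpT
  -- select indices
  have hselex : ∀ x : ↥p, ∃ i, i < κ.ord ∧ (x.1.1.2 < γs → x.1.1.2 < Gf N i) := by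
    intro x
    by_cases hx : x.1.1.2 < γs
    · rw [hγs, Gf_def] at hx
      obtain ⟨j, hj⟩ := (lt_csSup_iff' (Gf_bdd N κ.ord)).mp hx
      obtain ⟨⟨j, hjκ⟩, rfl⟩ := hj.1
      have h1 : x.1.1.2 < Gf N (j + 1) := lt_of_lt_of_le hj.2 (Gf_le N (lt_add_one j))
      have h2 : j + 1 < κ.ord := by
        rw [Ordinal.add_one_eq_succ]; exact hlimκ.succ_lt hjκ
      exact ⟨j + 1, h2, fun _ => h1⟩
    · exact ⟨0, hlimκ.pos, fun h => absurd h hx⟩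
  choose sel hsel1 hsel2 using hselex
  obtain ⟨is, hisκ, hisb⟩ := exists_strict_bound κ hreg (Set.range sel)
    (lt_of_le_of_lt Cardinal.mk_range_le (mk_cond_lt hp))
    (by rintro a ⟨x, rfl⟩; exact hsel1 x)
  have hkey : ∀ x ∈ p, x.1.2 < γs → x.1.2 < Gf N is := by
    intro x hx hxγ
    exact lt_trans (hsel2 ⟨x, hx⟩ hxγ) (Gf_mono N (hisb _ ⟨⟨x, hx⟩, rfl⟩))
  -- the restriction r and the witness q
  set γi : Ordinal.{0} := Gf N is with hγi
  have hγilt : γi < lam.ord := hGlt is hisκ.le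
  set r : Set ((Ordinal.{0} × Ordinal.{0}) × Ordinal.{0}) := {x ∈ p | x.1.2 < γi} with hr
  have hrcond : IsLevyCond κ lam r :=
    ⟨fun x hx => hp.1 x hx.1, fun x hx y hy => hp.2.1 x hx.1 y hy.1,
      lt_of_le_of_lt (Cardinal.mk_le_mk_of_subset
        (Set.image_mono (f := Prod.fst) (Set.sep_subset _ _))) hp.2.2⟩
  have hrext : ∃ p' ∈ T, {x ∈ p' | x.1.2 < γi} = r := ⟨p, hpT, rfl⟩
  obtain ⟨hqT, hqres⟩ := hwit γi r hrext
  set q := wit γi r with hq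
  have hqbd := hbd q hqT
  have hbdqlt : bd q < Gf N (is + 1) :=
    lt_of_lt_of_le ((hN γi hγilt).2 r ⟨hrcond, fun x hx => hx.2⟩ hrext)
      (Gf_N_le N (lt_add_one is))
  have his1 : is + 1 < κ.ord := by
    rw [Ordinal.add_one_eq_succ]; exact hlimκ.succ_lt hisκ
  have hqsupp : ∀ x ∈ q, x.1.2 < γs := by
    intro x hx
    exact lt_trans (lt_trans (hqbd.2 x hx) hbdqlt) (Gf_mono N his1)
  have hpq : p ≠ q := by
    intro he
    exact hpbig ⟨hp, fun x hx => hqsupp x (he ▸ hx)⟩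
  -- compatibility
  have hmix : ∀ x ∈ p, ∀ y ∈ q, x.1 = y.1 → x.2 = y.2 := by
    intro x hx y hy hxy
    have hxγ : x.1.2 < γs := by rw [hxy]; exact hqsupp y hy
    have hxr : x ∈ r := ⟨hx, hkey x hx hxγ⟩
    have hxq : x ∈ q := by
      have := hqres ▸ hxr
      exact this.1
    exact (hT q hqT).2.1 x hxq y hy hxy
  have hunion : IsLevyCond κ lam (p ∪ q) := by
    refine ⟨?_, ?_, ?_⟩
    · intro x hx
      rcases hx with hx | hx
      · exact hp.1 x hx
      · exact (hT q hqT).1 x hx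
    · intro x hx y hy hxy
      rcases hx with hx | hx <;> rcases hy with hy | hy
      · exact hp.2.1 x hx y hy hxy
      · exact hmix x hx y hy hxy
      · exact (hmix y hy x hx hxy.symm).symm
      · exact (hT q hqT).2.1 x hx y hy hxy
    · rw [Set.image_union]
      refine lt_of_le_of_lt (Cardinal.mk_union_le _ _) ?_
      refine Cardinal.add_lt_of_lt ?_ hp.2.2 (hT q hqT).2.2
      rwa [Cardinal.aleph0_le_lift]
  exact hanti p hpT q hqT hpq hunion
end
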